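/- Let μ₁ > μ₂ > 0 and p > 1 be real numbers, let β satisfy −√(μ₁μ₂) < β < 0, and set g(τ) = μ₁ + β·τ^p − μ₂·τ^{2p−2} − β·τ^{p−2} for τ > 0. Then there exists τ₀ with (|β|/μ₂)^{1/p} < τ₀ < (μ₁/|β|)^{1/p} such that g(τ₀) = 0, μ₁ + β·τ₀^p > 0 and μ₂·τ₀^{2p−2} + β·τ₀^{p−2} > 0. -/

import Mathlib

/-- Solvability of the proportionality equation for `-√(μ₁μ₂) < β < 0`: there exists
`τ₀` with `(|β|/μ₂)^{1/p} < τ₀ < (μ₁/|β|)^{1/p}` such that `g(τ₀) = 0`,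
`μ₁ + βτ₀^p > 0` and `μ₂τ₀^{2p-2} + βτ₀^{p-2} > 0`. -/
theorem g_has_root_beta_neg (p μ₁ μ₂ β : ℝ) (h12 : μ₂ < μ₁) (hμ₂ : 0 < μ₂) (hp : 1 < p)
    (hβ1 : -Real.sqrt (μ₁ * μ₂) < β) (hβ2 : β < 0)
    (g : ℝ → ℝ)
    (hg : ∀ τ > 0, g τ = μ₁ + β * τ ^ p - μ₂ * τ ^ (2 * p - 2) - β * τ ^ (p - 2)) :
    ∃ τ₀ : ℝ, (|β| / μ₂) ^ (1 / p) < τ₀ ∧ τ₀ < (μ₁ / |β|) ^ (1 / p) ∧ g τ₀ = 0 ∧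
      0 < μ₁ + β * τ₀ ^ p ∧ 0 < μ₂ * τ₀ ^ (2 * p - 2) + β * τ₀ ^ (p - 2) := by
  have hμ₁ : 0 < μ₁ := lt_trans hμ₂ h12
  have hβ : 0 < |β| := abs_pos.mpr (ne_of_lt hβ2)
  have habs : |β| = -β := abs_of_neg hβ2
  have hβ' : 0 < -β := by linarith
  have hβne : -β ≠ 0 := ne_of_gt hβ'
  have hp0 : 0 < p := lt_trans one_pos hp
  have hp0' : p ≠ 0 := ne_of_gt hp0
  -- β² < μ₁ μ₂
  have hβsq : β * β < μ₁ * μ₂ := by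
    have h1 : |β| < Real.sqrt (μ₁ * μ₂) := by rw [habs]; linarith
    have h2 := mul_lt_mul'' h1 h1 (abs_nonneg β) (abs_nonneg β)
    rw [Real.mul_self_sqrt (by positivity)] at h2
    nlinarith [abs_mul_abs_self β]
  set a := (|β| / μ₂) ^ (1 / p) with ha_def
  set b := (μ₁ / |β|) ^ (1 / p) with hb_def
  have ha_pos : 0 < a := Real.rpow_pos_of_pos (by positivity) _
  have hb_pos : 0 < b := Real.rpow_pos_of_pos (by positivity) _
  have hap : a ^ p = -β / μ₂ := by
    rw [ha_def, ← Real.rpow_mul (by positivity), one_div_mul_cancel hp0', Real.rpow_one, habs]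
  have hbp : b ^ p = μ₁ / -β := by
    rw [hb_def, ← Real.rpow_mul (by positivity), one_div_mul_cancel hp0', Real.rpow_one, habs]
  have hdiv : |β| / μ₂ < μ₁ / |β| := by
    rw [div_lt_div_iff₀ hμ₂ hβ, habs]; nlinarith
  have hab : a < b := Real.rpow_lt_rpow (by positivity) hdiv (by positivity)
  -- rewrite of the 2p-2 power
  have hsplit : ∀ τ : ℝ, 0 < τ → τ ^ (2 * p - 2) = τ ^ p * τ ^ (p - 2) := by
    intro τ hτ
    rw [← Real.rpow_add hτ]; ring_nf
  have hβμ : β * (μ₁ / -β) = -μ₁ := by field_simp; rw [div_self (ne_of_lt hβ2)]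
  -- values at endpoints
  have hga : 0 < g a := by
    rw [hg a ha_pos, hsplit a ha_pos, hap]
    have e : μ₂ * (-β / μ₂ * a ^ (p - 2)) = -β * a ^ (p - 2) := by field_simp
    have eq2 : μ₁ + β * (-β / μ₂) - -β * a ^ (p - 2) - β * a ^ (p - 2)
        = μ₁ - β * β / μ₂ := by ring
    rw [e, eq2]
    have : β * β / μ₂ < μ₁ := by rw [div_lt_iff₀ hμ₂]; nlinarith
    linarith
  have hgb : g b < 0 := by
    rw [hg b hb_pos, hsplit b hb_pos, hbp]
    have hbp2 : 0 < b ^ (p - 2) := Real.rpow_pos_of_pos hb_pos _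
    have h3 : -β < μ₂ * (μ₁ / -β) := by
      have e : μ₂ * (μ₁ / -β) = μ₂ * μ₁ / -β := by ring
      rw [e, lt_div_iff₀ hβ']
      nlinarith
    have h4 : 0 < μ₂ * (μ₁ / -β) + β := by linarith
    have eq2 : μ₁ + β * (μ₁ / -β) - μ₂ * (μ₁ / -β * b ^ (p - 2)) - β * b ^ (p - 2)
        = (μ₁ + β * (μ₁ / -β)) - (μ₂ * (μ₁ / -β) + β) * b ^ (p - 2) := by ring
    rw [eq2, hβμ]
    have := mul_pos h4 hbp2
    linarith
  -- continuity on [a,b]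
  have hcont : ContinuousOn g (Set.Icc a b) := by
    have hsub : ∀ x ∈ Set.Icc a b, x ≠ 0 := fun x hx =>
      ne_of_gt (lt_of_lt_of_le ha_pos hx.1)
    have hF : ContinuousOn
        (fun τ : ℝ => μ₁ + β * τ ^ p - μ₂ * τ ^ (2 * p - 2) - β * τ ^ (p - 2))
        (Set.Icc a b) := by
      apply ContinuousOn.sub
      apply ContinuousOn.sub
      apply ContinuousOn.add continuousOn_const
      · exact continuousOn_const.mul (ContinuousOn.rpow_const continuousOn_id
          (fun x hx => Or.inl (hsub x hx)))
      · exact continuousOn_const.mul (ContinuousOn.rpow_const continuousOn_id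
          (fun x hx => Or.inl (hsub x hx)))
      · exact continuousOn_const.mul (ContinuousOn.rpow_const continuousOn_id
          (fun x hx => Or.inl (hsub x hx)))
    exact hF.congr (fun x hx => hg x (lt_of_lt_of_le ha_pos hx.1))
  -- IVT
  have hmem : (0 : ℝ) ∈ Set.Ioo (g b) (g a) := ⟨hgb, hga⟩
  obtain ⟨τ₀, hτ₀mem, hτ₀⟩ := intermediate_value_Ioo' (le_of_lt hab) hcont hmem
  have hτ₀pos : 0 < τ₀ := lt_trans ha_pos hτ₀mem.1
  refine ⟨τ₀, hτ₀mem.1, hτ₀mem.2, hτ₀, ?_, ?_⟩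
  · have h1 : τ₀ ^ p < b ^ p :=
      Real.rpow_lt_rpow (le_of_lt hτ₀pos) hτ₀mem.2 hp0
    rw [hbp] at h1
    have h2 : β * (μ₁ / -β) < β * τ₀ ^ p := mul_lt_mul_of_neg_left h1 hβ2
    linarith [hβμ]
  · rw [hsplit τ₀ hτ₀pos]
    have h1 : a ^ p < τ₀ ^ p :=
      Real.rpow_lt_rpow (le_of_lt ha_pos) hτ₀mem.1 hp0
    rw [hap] at h1
    have h2 : μ₂ * (-β / μ₂) = -β := by field_simp
    have h3 : -β < μ₂ * τ₀ ^ p := by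
      rw [← h2]; exact mul_lt_mul_of_pos_left h1 hμ₂
    have h4 : 0 < μ₂ * τ₀ ^ p + β := by linarith
    have h5 : 0 < τ₀ ^ (p - 2) := Real.rpow_pos_of_pos hτ₀pos _
    nlinarith
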